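/- Let p be a prime and let L/K be a finite Galois extension of local fields of characteristic (0,p) with Galois group G, and assume L/K is tamely ramified (the ramification index e_{L/K} is prime to p). Let A and B be 𝒪_L-modules each equipped with an additive action of G that is semilinear over the natural action of G on 𝒪_L, i.e. g·(c·a) = g(c)·(g·a) for all g ∈ G, c ∈ 𝒪_L, a ∈ A, and let f : A → B be a surjective 𝒪_L-linear G-equivariant map. Then the induced map on G-fixed points A^G → B^G is surjective; equivalently, the fixed-points functor from 𝒪_L-modules with semilinear G-action to 𝒪_K-modules is exact. -/

import Mathlib

/-- Data exhibiting `L` as a local field of characteristic `(0, p)`: a multiplicative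
nonarchimedean absolute value `a` (representing the absolute valuation `v` via
`a x = c ^ v x` for a base `0 < c < 1`), a uniformizer `ϖ` generating the (discrete)
value group, residue characteristic `p` (`a p < 1`), completeness, and perfectness of
the residue field (surjectivity of the `p`-power map on residues). -/
structure LocalFieldData (p : ℕ) (L : Type*) [Field L] where
  a : L → ℝ
  a_zero : a 0 = 0
  a_pos : ∀ x : L, x ≠ 0 → 0 < a x
  a_mul : ∀ x y : L, a (x * y) = a x * a y
  a_add : ∀ x y : L, a (x + y) ≤ max (a x) (a y)
  ϖ : L
  ϖ_pos : 0 < a ϖ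
  ϖ_lt_one : a ϖ < 1
  disc : ∀ x : L, x ≠ 0 → ∃ k : ℤ, a x = a ϖ ^ k
  res_char : a (p : L) < 1
  complete : ∀ u : ℕ → L,
    (∀ ε : ℝ, 0 < ε → ∃ N : ℕ, ∀ m ≥ N, ∀ n ≥ N, a (u m - u n) < ε) →
    ∃ l : L, ∀ ε : ℝ, 0 < ε → ∃ N : ℕ, ∀ n ≥ N, a (u n - l) < ε
  perfect_res : ∀ x : L, a x ≤ 1 → ∃ y : L, a y ≤ 1 ∧ a (x - y ^ p) < 1


namespace LocalFieldData

variable {p : ℕ} {L : Type*} [Field L] (D : LocalFieldData p L)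

lemma a_nonneg (x : L) : 0 ≤ D.a x := by
  rcases eq_or_ne x 0 with h | h
  · simp [h, D.a_zero]
  · exact (D.a_pos x h).le

lemma a_one : D.a 1 = 1 := by
  have h : D.a 1 * D.a 1 = D.a 1 * 1 := by
    rw [← D.a_mul]; norm_num
  exact mul_left_cancel₀ (D.a_pos 1 one_ne_zero).ne' h

/-- `a` as a monoid-with-zero hom. -/
noncomputable def mhom : L →*₀ ℝ where
  toFun := D.a
  map_zero' := D.a_zero
  map_one' := D.a_one
  map_mul' := D.a_mul

lemma a_inv (x : L) : D.a x⁻¹ = (D.a x)⁻¹ := map_inv₀ D.mhom x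

lemma a_zpow (x : L) (n : ℤ) : D.a (x ^ n) = D.a x ^ n := map_zpow₀ D.mhom x n

lemma a_neg (x : L) : D.a (-x) = D.a x := by
  have h1 : D.a (-1 : L) = 1 := by
    have h : D.a (-1 : L) * D.a (-1 : L) = 1 := by
      rw [← D.a_mul]; norm_num [D.a_one]
    nlinarith [D.a_nonneg (-1 : L)]
  calc D.a (-x) = D.a ((-1) * x) := by ring_nf
    _ = D.a x := by rw [D.a_mul, h1, one_mul]

lemma a_sub_le (x y : L) : D.a (x - y) ≤ max (D.a x) (D.a y) := by
  have h := D.a_add x (-y)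
  rwa [D.a_neg y, ← sub_eq_add_neg] at h


lemma a_sum_le {ι : Type*} (s : Finset ι) (F : ι → L) {C : ℝ} (hC : 0 ≤ C)
    (h : ∀ i ∈ s, D.a (F i) ≤ C) : D.a (∑ i ∈ s, F i) ≤ C := by
  classical
  induction s using Finset.cons_induction with
  | empty => simpa [D.a_zero] using hC
  | cons i s his ih =>
    rw [Finset.sum_cons]
    refine le_trans (D.a_add _ _) (max_le (h i (by simp)) (ih fun j hj => h j (by simp [hj])))

lemma a_sum_lt {ι : Type*} (s : Finset ι) (F : ι → L) {C : ℝ} (hC : 0 < C)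
    (h : ∀ i ∈ s, D.a (F i) < C) : D.a (∑ i ∈ s, F i) < C := by
  classical
  induction s using Finset.cons_induction with
  | empty => simpa [D.a_zero] using hC
  | cons i s his ih =>
    rw [Finset.sum_cons]
    refine lt_of_le_of_lt (D.a_add _ _) (max_lt (h i (by simp)) (ih fun j hj => h j (by simp [hj])))

lemma a_add_eq_left {x y : L} (h : D.a y < D.a x) : D.a (x + y) = D.a x := by
  refine le_antisymm (le_trans (D.a_add x y) (max_le le_rfl h.le)) ?_
  by_contra hlt
  push_neg at hlt
  have h2 : D.a x ≤ max (D.a (x + y)) (D.a y) := by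
    have := D.a_sub_le (x + y) y
    simpa using this
  rcases max_cases (D.a (x + y)) (D.a y) with ⟨he, _⟩ | ⟨he, _⟩ <;> rw [he] at h2 <;> linarith

lemma a_natCast (n : ℕ) : D.a (n : L) ≤ 1 := by
  induction n with
  | zero => simp [D.a_zero]
  | succ n ih =>
    push_cast
    exact le_trans (D.a_add _ _) (max_le ih (le_of_eq D.a_one))

lemma a_intCast (n : ℤ) : D.a (n : L) ≤ 1 := by
  rcases Int.natAbs_eq n with h | h <;> rw [h]
  · rw [Int.cast_natCast]; exact D.a_natCast _
  · rw [Int.cast_neg, Int.cast_natCast, D.a_neg]; exact D.a_natCast _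

lemma a_nat_unit (hp : p.Prime) {m : ℕ} (hm : ¬ p ∣ m) : D.a (m : L) = 1 := by
  refine le_antisymm (D.a_natCast m) ?_
  have hcop : IsCoprime (p : ℤ) (m : ℤ) := by
    rw [Int.isCoprime_iff_gcd_eq_one]
    exact_mod_cast (hp.coprime_iff_not_dvd.mpr hm)
  obtain ⟨u, v, huv⟩ := hcop
  have hL : (u : L) * (p : L) + (v : L) * (m : L) = 1 := by
    have := congrArg (fun z : ℤ => (z : L)) huv
    push_cast at this
    simpa using this
  have h1 : (1 : ℝ) ≤ max (D.a ((u : L) * (p : L))) (D.a ((v : L) * (m : L))) := by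
    calc (1 : ℝ) = D.a 1 := D.a_one.symm
      _ = D.a ((u : L) * (p : L) + (v : L) * (m : L)) := by rw [hL]
      _ ≤ _ := D.a_add _ _
  have h2 : D.a ((u : L) * (p : L)) < 1 := by
    rw [D.a_mul]
    calc D.a (u : L) * D.a (p : L) ≤ 1 * D.a (p : L) := by
          exact mul_le_mul_of_nonneg_right (D.a_intCast u) (D.a_nonneg _)
      _ = D.a (p : L) := one_mul _
      _ < 1 := D.res_char
  have h3 : D.a ((v : L) * (m : L)) ≤ D.a (m : L) := by
    rw [D.a_mul]
    calc D.a (v : L) * D.a (m : L) ≤ 1 * D.a (m : L) :=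
          mul_le_mul_of_nonneg_right (D.a_intCast v) (D.a_nonneg _)
      _ = D.a (m : L) := one_mul _
  rcases max_cases (D.a ((u : L) * (p : L))) (D.a ((v : L) * (m : L))) with ⟨he, _⟩ | ⟨he, _⟩ <;>
    rw [he] at h1 <;> linarith


lemma a_prod_le_one {ι : Type*} (s : Finset ι) (F : ι → L)
    (h : ∀ i ∈ s, D.a (F i) ≤ 1) : D.a (∏ i ∈ s, F i) ≤ 1 := by
  classical
  induction s using Finset.cons_induction with
  | empty => simp [D.a_one]
  | cons i s his ih =>
    rw [Finset.prod_cons, D.a_mul]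
    exact mul_le_one₀ (h i (by simp)) (D.a_nonneg _) (ih fun j hj => h j (by simp [hj]))

lemma a_prod_sub_prod {ι : Type*} (s : Finset ι) (u w : ι → L)
    (hu : ∀ i ∈ s, D.a (u i) ≤ 1) (hw : ∀ i ∈ s, D.a (w i) ≤ 1)
    (hd : ∀ i ∈ s, D.a (u i - w i) < 1) :
    D.a (∏ i ∈ s, u i - ∏ i ∈ s, w i) < 1 := by
  classical
  induction s using Finset.cons_induction with
  | empty => simpa [D.a_zero] using one_pos
  | cons i s his ih =>
    rw [Finset.prod_cons, Finset.prod_cons]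
    have key : u i * ∏ j ∈ s, u j - w i * ∏ j ∈ s, w j
        = u i * (∏ j ∈ s, u j - ∏ j ∈ s, w j) + (u i - w i) * ∏ j ∈ s, w j := by ring
    rw [key]
    refine lt_of_le_of_lt (D.a_add _ _) (max_lt ?_ ?_)
    · rw [D.a_mul]
      calc D.a (u i) * D.a (∏ j ∈ s, u j - ∏ j ∈ s, w j)
          ≤ 1 * D.a (∏ j ∈ s, u j - ∏ j ∈ s, w j) :=
            mul_le_mul_of_nonneg_right (hu i (by simp)) (D.a_nonneg _)
        _ = _ := one_mul _
        _ < 1 := ih (fun j hj => hu j (by simp [hj])) (fun j hj => hw j (by simp [hj]))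
              (fun j hj => hd j (by simp [hj]))
    · rw [D.a_mul]
      calc D.a (u i - w i) * D.a (∏ j ∈ s, w j)
          ≤ D.a (u i - w i) * 1 :=
            mul_le_mul_of_nonneg_left (D.a_prod_le_one s w fun j hj => hw j (by simp [hj]))
              (D.a_nonneg _)
        _ = D.a (u i - w i) := mul_one _
        _ < 1 := hd i (by simp)

/-- A value `< 1` is at most `a D.ϖ`. -/
lemma a_le_base {x : L} (h : D.a x < 1) : D.a x ≤ D.a D.ϖ := by
  rcases eq_or_ne x 0 with rfl | hx
  · rw [D.a_zero]; exact D.ϖ_pos.le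
  obtain ⟨k, hk⟩ := D.disc x hx
  rw [hk] at h ⊢
  have h0 : D.a D.ϖ ^ (0 : ℤ) = 1 := zpow_zero _
  have hk0 : (0 : ℤ) < k := by
    by_contra hle
    push_neg at hle
    have := zpow_le_zpow_right_of_le_one₀ D.ϖ_pos D.ϖ_lt_one.le hle
    rw [h0] at this
    linarith
  calc D.a D.ϖ ^ k ≤ D.a D.ϖ ^ (1 : ℤ) :=
        zpow_le_zpow_right_of_le_one₀ D.ϖ_pos D.ϖ_lt_one.le hk0
    _ = D.a D.ϖ := zpow_one _

end LocalFieldData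


section Artin

variable {p : ℕ} {K L : Type*} [Field K] [Field L] [Algebra K L]

lemma artin_aux (DL : LocalFieldData p L)
    (hinv : ∀ (g : L ≃ₐ[K] L) (x : L), DL.a (g x) = DL.a x) (n : ℕ) :
    ∀ (s : Finset (L ≃ₐ[K] L)), s.card ≤ n → ∀ (lam : (L ≃ₐ[K] L) → L),
      (∀ g ∈ s, DL.a (lam g) ≤ 1) →
      (∃ g₀ ∈ s, DL.a (lam g₀) = 1) →
      (∀ g ∈ s, ∀ h ∈ s, g ≠ h → ∃ x, DL.a x ≤ 1 ∧ DL.a (g x - h x) = 1) →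
      (∀ t : L, DL.a t ≤ 1 → DL.a (∑ g ∈ s, lam g * g t) < 1) → False := by
  induction n with
  | zero =>
    intro s hcard lam _ hex _ _
    obtain ⟨g₀, hg₀, _⟩ := hex
    rw [Nat.le_zero, Finset.card_eq_zero] at hcard
    simp [hcard] at hg₀
  | succ n ih =>
    intro s hcard lam hle hex hdist hsmall
    classical
    obtain ⟨g₀, hg₀s, hg₀⟩ := hex
    by_cases hcase : ∀ g ∈ s.erase g₀, DL.a (lam g) < 1
    · -- take t = 1
      have h1 : DL.a (∑ g ∈ s, lam g * g 1) < 1 := hsmall 1 (le_of_eq DL.a_one)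
      have hsum : ∑ g ∈ s, lam g * g 1 = lam g₀ + ∑ g ∈ s.erase g₀, lam g := by
        rw [← Finset.add_sum_erase s _ hg₀s]
        simp
      rw [hsum] at h1
      have h2 : DL.a (lam g₀ + ∑ g ∈ s.erase g₀, lam g) = 1 := by
        rw [DL.a_add_eq_left (by rw [hg₀]; exact DL.a_sum_lt _ _ one_pos hcase), hg₀]
      linarith
    · push_neg at hcase
      obtain ⟨g₁, hg₁e, hg₁big⟩ := hcase
      have hg₁s : g₁ ∈ s := Finset.mem_of_mem_erase hg₁e
      have hg₁ne : g₁ ≠ g₀ := Finset.ne_of_mem_erase hg₁e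
      have hg₁ : DL.a (lam g₁) = 1 := le_antisymm (hle g₁ hg₁s) hg₁big
      obtain ⟨c, hc, hsep⟩ := hdist g₀ hg₀s g₁ hg₁s (Ne.symm hg₁ne)
      set μ : (L ≃ₐ[K] L) → L := fun g => lam g * (g₁ c - g c) with hμ
      have hμle : ∀ g ∈ s.erase g₁, DL.a (μ g) ≤ 1 := by
        intro g hg
        rw [hμ, DL.a_mul]
        have h1 : DL.a (g₁ c - g c) ≤ 1 := by
          refine le_trans (DL.a_sub_le _ _) (max_le ?_ ?_) <;> rw [hinv] <;> exact hc
        exact mul_le_one₀ (hle g (Finset.mem_of_mem_erase hg)) (DL.a_nonneg _) h1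
      have hμg₀ : DL.a (μ g₀) = 1 := by
        rw [hμ, DL.a_mul, hg₀, one_mul]
        rw [show g₁ c - g₀ c = -(g₀ c - g₁ c) by ring, DL.a_neg, hsep]
      have hμsmall : ∀ t : L, DL.a t ≤ 1 → DL.a (∑ g ∈ s.erase g₁, μ g * g t) < 1 := by
        intro t ht
        have hterm : ∑ g ∈ s.erase g₁, μ g * g t = ∑ g ∈ s, μ g * g t := by
          refine Finset.sum_erase s ?_
          rw [hμ]; simp
        have hexpand : ∑ g ∈ s, μ g * g t
            = g₁ c * ∑ g ∈ s, lam g * g t - ∑ g ∈ s, lam g * g (c * t) := by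
          rw [Finset.mul_sum, ← Finset.sum_sub_distrib]
          refine Finset.sum_congr rfl fun g hg => ?_
          rw [hμ, map_mul]
          ring
        rw [hterm, hexpand, sub_eq_add_neg]
        refine lt_of_le_of_lt (DL.a_add _ _) (max_lt ?_ ?_)
        · rw [DL.a_mul]
          have h1 : DL.a (g₁ c) ≤ 1 := by rw [hinv]; exact hc
          calc DL.a (g₁ c) * DL.a (∑ g ∈ s, lam g * g t)
              ≤ 1 * DL.a (∑ g ∈ s, lam g * g t) :=
                mul_le_mul_of_nonneg_right h1 (DL.a_nonneg _)
            _ = _ := one_mul _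
            _ < 1 := hsmall t ht
        · rw [DL.a_neg]
          refine hsmall (c * t) ?_
          rw [DL.a_mul]
          exact mul_le_one₀ hc (DL.a_nonneg _) ht
      refine ih (s.erase g₁) ?_ μ hμle ⟨g₀, Finset.mem_erase.mpr ⟨hg₁ne.symm, hg₀s⟩, hμg₀⟩
        (fun g hg h hh hne => hdist g (Finset.mem_of_mem_erase hg) h (Finset.mem_of_mem_erase hh) hne)
        hμsmall
      have := Finset.card_erase_of_mem hg₁s
      omega

lemma artin (DL : LocalFieldData p L)
    (hinv : ∀ (g : L ≃ₐ[K] L) (x : L), DL.a (g x) = DL.a x)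
    (s : Finset (L ≃ₐ[K] L)) (lam : (L ≃ₐ[K] L) → L)
    (hle : ∀ g ∈ s, DL.a (lam g) ≤ 1)
    (hex : ∃ g₀ ∈ s, DL.a (lam g₀) = 1)
    (hdist : ∀ g ∈ s, ∀ h ∈ s, g ≠ h → ∃ x, DL.a x ≤ 1 ∧ DL.a (g x - h x) = 1) :
    ∃ t : L, DL.a t ≤ 1 ∧ DL.a (∑ g ∈ s, lam g * g t) = 1 := by
  by_contra hcon
  push_neg at hcon
  refine artin_aux DL hinv s.card s le_rfl lam hle hex hdist fun t ht => ?_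
  have hub : DL.a (∑ g ∈ s, lam g * g t) ≤ 1 := by
    refine DL.a_sum_le s _ zero_le_one fun g hg => ?_
    rw [DL.a_mul]
    have : DL.a (g t) ≤ 1 := by rw [hinv]; exact ht
    exact mul_le_one₀ (hle g hg) (DL.a_nonneg _) this
  exact lt_of_le_of_ne hub (hcon t ht)

end Artin


section NoWild

variable {p : ℕ} {K L : Type*} [Field K] [Field L] [Algebra K L]

/-- In a tame situation, the inertia group has no element of order `p`. -/
lemma no_order_p (DL : LocalFieldData p L) (hp : p.Prime)
    (hinv : ∀ (g : L ≃ₐ[K] L) (x : L), DL.a (g x) = DL.a x)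
    {KP : L} (hKP : KP ≠ 0) (hKPfix : ∀ g : L ≃ₐ[K] L, g KP = KP)
    (eLK : ℕ) (heLK : DL.a KP = DL.a DL.ϖ ^ eLK) (htame : ¬ p ∣ eLK)
    (g : L ≃ₐ[K] L) (hg : ∀ x : L, DL.a x ≤ 1 → DL.a (g x - x) < 1)
    (hord : orderOf g = p) : False := by
  classical
  have hc0 : (0:ℝ) < DL.a DL.ϖ := DL.ϖ_pos
  have hc1 : DL.a DL.ϖ < 1 := DL.ϖ_lt_one
  -- residue-triviality of powers of `g`
  have hgi : ∀ (i : ℕ) (x : L), DL.a x ≤ 1 → DL.a ((g ^ i) x - x) < 1 := by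
    intro i
    induction i with
    | zero => intro x hx; simp [DL.a_zero]
    | succ i ih =>
      intro x hx
      have hyle : DL.a ((g ^ i) x) ≤ 1 := by rw [hinv]; exact hx
      have hsplit : (g ^ (i+1)) x - x = (g ((g ^ i) x) - (g ^ i) x) + ((g ^ i) x - x) := by
        rw [pow_succ']
        simp [AlgEquiv.mul_apply]
      rw [hsplit]
      exact lt_of_le_of_lt (DL.a_add _ _) (max_lt (hg _ hyle) (ih x hx))
  -- the norm along the cyclic group generated by `g`
  set N : L → L := fun x => ∏ i ∈ Finset.range p, (g ^ i) x with hN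
  have hgp : g ^ p = 1 := by rw [← hord]; exact pow_orderOf_eq_one g
  have hNfix : ∀ x : L, g (N x) = N x := by
    intro x
    rcases eq_or_ne x 0 with rfl | hx
    · have hz : N (0 : L) = 0 := by
        refine Finset.prod_eq_zero (Finset.mem_range.mpr hp.pos) ?_
        simp
      rw [hz, map_zero]
    · set f : ℕ → L := fun j => (g ^ j) x with hf
      have hmap : g (N x) = ∏ i ∈ Finset.range p, f (i + 1) := by
        rw [hN, map_prod]
        refine Finset.prod_congr rfl fun i _ => ?_
        show g ((g ^ i) x) = (g ^ (i + 1)) x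
        rw [pow_succ', AlgEquiv.mul_apply]
      have hfp : f p = x := by show (g ^ p) x = x; rw [hgp]; rfl
      have hf0 : f 0 = x := by show (g ^ 0) x = x; rw [pow_zero]; rfl
      have h1 : (∏ i ∈ Finset.range p, f (i + 1)) * f 0 = (∏ i ∈ Finset.range p, f i) * f p := by
        rw [← Finset.prod_range_succ' f p, Finset.prod_range_succ]
      rw [hfp, hf0] at h1
      have h2 : ∏ i ∈ Finset.range p, f (i + 1) = ∏ i ∈ Finset.range p, f i :=
        mul_right_cancel₀ hx h1
      rw [hmap, h2, hN]
  have hNval : ∀ x : L, DL.a (N x) = DL.a x ^ p := by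
    intro x
    rw [hN]
    have : DL.a (∏ i ∈ Finset.range p, (g ^ i) x) = ∏ i ∈ Finset.range p, DL.a ((g ^ i) x) :=
      map_prod DL.mhom _ _
    rw [this]
    have : ∀ i ∈ Finset.range p, DL.a ((g ^ i) x) = DL.a x := fun i _ => hinv _ x
    rw [Finset.prod_congr rfl this, Finset.prod_const, Finset.card_range]
  have hNres : ∀ x : L, DL.a x ≤ 1 → DL.a (N x - x ^ p) < 1 := by
    intro x hx
    have hxp : x ^ p = ∏ _i ∈ Finset.range p, x := by
      rw [Finset.prod_const, Finset.card_range]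
    rw [hN, hxp]
    exact DL.a_prod_sub_prod _ _ _ (fun i _ => by rw [hinv]; exact hx)
      (fun i _ => hx) (fun i _ => hgi i x hx)
  -- approximation of residues by `g`-fixed elements
  have happrox : ∀ x : L, DL.a x ≤ 1 → ∃ m : L, g m = m ∧ DL.a m ≤ 1 ∧ DL.a (x - m) < 1 := by
    intro x hx
    obtain ⟨y, hy, hxy⟩ := DL.perfect_res x hx
    refine ⟨N y, hNfix y, ?_, ?_⟩
    · rw [hNval]
      exact pow_le_one₀ (DL.a_nonneg y) hy
    · have : x - N y = (x - y ^ p) + -(N y - y ^ p) := by ring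
      rw [this]
      refine lt_of_le_of_lt (DL.a_add _ _) (max_lt hxy ?_)
      rw [DL.a_neg]
      exact hNres y hy
  -- a `g`-fixed element of absolute value `a ϖ`
  obtain ⟨U, W, hUW⟩ : ∃ U W : ℤ, U * p + W * eLK = 1 := by
    have hcop : IsCoprime (p : ℤ) (eLK : ℤ) := by
      rw [Int.isCoprime_iff_gcd_eq_one]
      exact_mod_cast (hp.coprime_iff_not_dvd.mpr htame)
    obtain ⟨u, v, huv⟩ := hcop
    exact ⟨u, v, huv⟩
  have hπ0 : DL.ϖ ≠ 0 := by
    intro h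
    rw [h, DL.a_zero] at hc0
    exact lt_irrefl _ hc0
  set m₁ : L := (N DL.ϖ) ^ U * KP ^ W with hm₁
  have hNπ0 : N DL.ϖ ≠ 0 := by
    intro h
    have h1 : DL.a (N DL.ϖ) = 0 := by rw [h, DL.a_zero]
    rw [hNval] at h1
    exact (pow_pos hc0 p).ne' h1
  have hm₁fix : g m₁ = m₁ := by
    rw [hm₁, map_mul, map_zpow₀, map_zpow₀, hNfix, hKPfix]
  have hm₁val : DL.a m₁ = DL.a DL.ϖ := by
    rw [hm₁, DL.a_mul, DL.a_zpow, DL.a_zpow, hNval, heLK]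
    rw [← zpow_natCast (DL.a DL.ϖ) p, ← zpow_natCast (DL.a DL.ϖ) eLK,
      ← zpow_mul, ← zpow_mul, ← zpow_add₀ hc0.ne']
    rw [show (p : ℤ) * U + (eLK : ℤ) * W = 1 by linarith [hUW]]
    exact zpow_one _
  have hm₁0 : m₁ ≠ 0 := by
    intro h
    rw [h, DL.a_zero] at hm₁val
    exact hc0.ne' hm₁val.symm
  -- the contraction estimate
  have key : ∀ (n : ℕ) (x : L), DL.a x ≤ 1 → DL.a (g x - x) ≤ DL.a DL.ϖ ^ n := by
    intro n
    induction n with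
    | zero =>
      intro x hx
      rw [pow_zero]
      exact le_trans (DL.a_sub_le _ _) (max_le (by rw [hinv]; exact hx) hx)
    | succ n ih =>
      intro x hx
      obtain ⟨m, hmfix, hmle, hxm⟩ := happrox x hx
      set y : L := (x - m) * m₁⁻¹ with hy
      have hxeq : x = m + m₁ * y := by
        rw [hy]
        field_simp
        ring
      have hyle : DL.a y ≤ 1 := by
        rw [hy, DL.a_mul, DL.a_inv, hm₁val]
        rw [← div_eq_mul_inv, div_le_one hc0]
        exact DL.a_le_base hxm
      have hdiff : g x - x = m₁ * (g y - y) := by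
        conv_lhs => rw [hxeq]
        rw [map_add, map_mul, hmfix, hm₁fix]
        ring
      rw [hdiff, DL.a_mul, hm₁val, pow_succ, mul_comm]
      exact mul_le_mul_of_nonneg_right (ih y hyle) hc0.le
  have hfixO : ∀ x : L, DL.a x ≤ 1 → g x = x := by
    intro x hx
    by_contra hne
    have hpos : (0:ℝ) < DL.a (g x - x) := DL.a_pos _ (sub_ne_zero.mpr hne)
    obtain ⟨n, hn⟩ := exists_pow_lt_of_lt_one hpos hc1
    exact absurd (key n x hx) (not_le.mpr hn)
  have hfix : ∀ x : L, g x = x := by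
    intro x
    rcases le_or_gt (DL.a x) 1 with h | h
    · exact hfixO x h
    · have hx0 : x ≠ 0 := by
        intro h0
        rw [h0, DL.a_zero] at h
        linarith
      have hinvle : DL.a x⁻¹ ≤ 1 := by
        rw [DL.a_inv]
        exact inv_le_one_of_one_le₀ h.le
      have := hfixO x⁻¹ hinvle
      rw [map_inv₀] at this
      exact inv_injective this
  have hg1 : g = 1 := AlgEquiv.ext fun x => by rw [hfix x]; rfl
  rw [hg1, orderOf_one] at hord
  exact hp.one_lt.ne hord

end NoWild


section Trace

variable {p : ℕ} {K L : Type*} [Field K] [Field L] [Algebra K L]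

/-- Key lemma: there is an integral element whose "trace" `∑ g, g t` is a unit. -/
lemma exists_trace_unit [Fintype (L ≃ₐ[K] L)] (DL : LocalFieldData p L) (hp : p.Prime)
    (hinv : ∀ (g : L ≃ₐ[K] L) (x : L), DL.a (g x) = DL.a x)
    {KP : L} (hKP : KP ≠ 0) (hKPfix : ∀ g : L ≃ₐ[K] L, g KP = KP)
    (eLK : ℕ) (heLK : DL.a KP = DL.a DL.ϖ ^ eLK) (htame : ¬ p ∣ eLK) :
    ∃ t : L, DL.a t ≤ 1 ∧ DL.a (∑ g : L ≃ₐ[K] L, g t) = 1 := by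
  classical
  -- the inertia subgroup
  set I : Subgroup (L ≃ₐ[K] L) :=
    { carrier := {g | ∀ x : L, DL.a x ≤ 1 → DL.a (g x - x) < 1}
      one_mem' := by intro x hx; simp [DL.a_zero]
      mul_mem' := by
        intro g h hgm hhm x hx
        have hyle : DL.a (h x) ≤ 1 := by rw [hinv]; exact hx
        have hsplit : (g * h) x - x = (g (h x) - h x) + (h x - x) := by
          rw [AlgEquiv.mul_apply]; ring
        rw [hsplit]
        exact lt_of_le_of_lt (DL.a_add _ _) (max_lt (hgm _ hyle) (hhm x hx))
      inv_mem' := by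
        intro g hgm x hx
        have h1 : DL.a (g (g⁻¹ x - x)) < 1 := by
          have : g (g⁻¹ x - x) = x - g x := by
            rw [map_sub]
            congr 1
            exact AlgEquiv.apply_symm_apply g x
          rw [this]
          have := hgm x hx
          calc DL.a (x - g x) = DL.a (-(g x - x)) := by ring_nf
            _ = DL.a (g x - x) := DL.a_neg _
            _ < 1 := this
        rwa [hinv] at h1 } with hI
  have hImem : ∀ g : L ≃ₐ[K] L, g ∈ I ↔ ∀ x : L, DL.a x ≤ 1 → DL.a (g x - x) < 1 := by
    intro g; rfl
  -- `p` does not divide the order of `I`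
  have hpI : ¬ p ∣ Fintype.card I := by
    intro hdvd
    haveI : Fact p.Prime := ⟨hp⟩
    obtain ⟨σ, hσ⟩ := exists_prime_orderOf_dvd_card p hdvd
    exact no_order_p DL hp hinv hKP hKPfix eLK heLK htame (σ : L ≃ₐ[K] L)
      ((hImem _).mp σ.2) (by rw [Subgroup.orderOf_coe]; exact hσ)
  -- coset representatives
  set out : (L ≃ₐ[K] L) ⧸ I → (L ≃ₐ[K] L) := fun q => q.out with hout
  have hout_eq : ∀ q, (out q : (L ≃ₐ[K] L) ⧸ I) = q := fun q => QuotientGroup.out_eq' q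
  have hout_inj : Function.Injective out := by
    intro q q' h
    rw [← hout_eq q, ← hout_eq q', h]
  set s : Finset (L ≃ₐ[K] L) := Finset.univ.image out with hs
  -- the Dedekind independence input
  obtain ⟨t, ht, htr⟩ := artin DL hinv s (fun _ => 1)
    (fun g _ => le_of_eq DL.a_one)
    ⟨out (QuotientGroup.mk 1), Finset.mem_image.mpr ⟨QuotientGroup.mk 1, Finset.mem_univ _, rfl⟩, DL.a_one⟩
    (by
      intro g hgs h hhs hne
      obtain ⟨q, _, rfl⟩ := Finset.mem_image.mp hgs
      obtain ⟨q', _, rfl⟩ := Finset.mem_image.mp hhs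
      have hqq : q ≠ q' := fun hq => hne (by rw [hq])
      have hnotmem : (out q)⁻¹ * out q' ∉ I := by
        intro hmem
        exact hqq (by rw [← hout_eq q, ← hout_eq q', QuotientGroup.eq] ; exact hmem)
      rw [hImem] at hnotmem
      push_neg at hnotmem
      obtain ⟨x, hx, hbig⟩ := hnotmem
      have hle1 : DL.a (((out q)⁻¹ * out q') x - x) ≤ 1 := by
        refine le_trans (DL.a_sub_le _ _) (max_le ?_ hx)
        rw [hinv]; exact hx
      have heq1 : DL.a (((out q)⁻¹ * out q') x - x) = 1 := le_antisymm hle1 hbig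
      refine ⟨x, hx, ?_⟩
      have hrw : (out q) ((((out q)⁻¹ * out q') x) - x) = out q' x - out q x := by
        rw [map_sub, ← AlgEquiv.mul_apply, mul_inv_cancel_left]
      have : DL.a (out q' x - out q x) = 1 := by rw [← hrw, hinv]; exact heq1
      calc DL.a (out q x - out q' x) = DL.a (-(out q' x - out q x)) := by ring_nf
        _ = 1 := by rw [DL.a_neg, this]
      )
  simp only [one_mul] at htr
  have htr' : DL.a (∑ q : (L ≃ₐ[K] L) ⧸ I, out q t) = 1 := by
    rwa [hs, Finset.sum_image (fun q _ q' _ h => hout_inj h)] at htr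
  -- assemble the full trace
  refine ⟨t, ht, ?_⟩
  -- the decomposition equivalence
  let e : ((L ≃ₐ[K] L) ⧸ I) × I ≃ (L ≃ₐ[K] L) :=
    { toFun := fun qi => out qi.1 * (qi.2 : L ≃ₐ[K] L)
      invFun := fun g => ⟨QuotientGroup.mk g, ⟨(out (QuotientGroup.mk g))⁻¹ * g, by
        rw [← QuotientGroup.eq]
        exact hout_eq _⟩⟩
      left_inv := by
        rintro ⟨q, i⟩
        have h1 : (QuotientGroup.mk (out q * (i : L ≃ₐ[K] L)) : (L ≃ₐ[K] L) ⧸ I) = q := by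
          rw [QuotientGroup.mk_mul_of_mem _ i.2]
          exact hout_eq q
        refine Prod.ext h1 (Subtype.ext ?_)
        show (out (QuotientGroup.mk (out q * (i : L ≃ₐ[K] L))))⁻¹ * (out q * (i : L ≃ₐ[K] L))
          = (i : L ≃ₐ[K] L)
        rw [h1, inv_mul_cancel_left]
      right_inv := by
        intro g
        show out (QuotientGroup.mk g) * ((out (QuotientGroup.mk g))⁻¹ * g) = g
        rw [mul_inv_cancel_left] }
  have hsum : ∑ g : L ≃ₐ[K] L, g t
      = ∑ qi : ((L ≃ₐ[K] L) ⧸ I) × I, (out qi.1 * (qi.2 : L ≃ₐ[K] L)) t :=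
    (Fintype.sum_equiv e _ _ (fun qi => rfl)).symm
  have hterm : ∀ qi : ((L ≃ₐ[K] L) ⧸ I) × I,
      (out qi.1 * (qi.2 : L ≃ₐ[K] L)) t = out qi.1 t + out qi.1 ((qi.2 : L ≃ₐ[K] L) t - t) := by
    intro qi
    rw [AlgEquiv.mul_apply, map_sub]
    ring
  rw [hsum, Finset.sum_congr rfl (fun qi _ => hterm qi), Finset.sum_add_distrib]
  have hmain : DL.a (∑ qi : ((L ≃ₐ[K] L) ⧸ I) × I, out qi.1 t) = 1 := by
    rw [Fintype.sum_prod_type]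
    have : ∀ q : (L ≃ₐ[K] L) ⧸ I, ∑ _i : I, out q t = (Fintype.card I : L) * out q t := by
      intro q
      rw [Finset.sum_const, Finset.card_univ, nsmul_eq_mul]
    rw [Finset.sum_congr rfl (fun q _ => this q), ← Finset.mul_sum, DL.a_mul,
      DL.a_nat_unit hp hpI, one_mul]
    exact htr'
  have herr : DL.a (∑ qi : ((L ≃ₐ[K] L) ⧸ I) × I, out qi.1 ((qi.2 : L ≃ₐ[K] L) t - t)) < 1 := by
    refine DL.a_sum_lt _ _ one_pos fun qi _ => ?_
    rw [hinv]
    exact qi.2.2 t ht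
  rw [DL.a_add_eq_left (by rw [hmain]; exact herr)]
  exact hmain

end Trace


/-- Let `L/K` be a finite tamely ramified Galois extension of local
fields of characteristic `(0,p)` with group `G = Gal(L/K)`, and let `𝒪 = 𝒪_L` be the
valuation ring of `L`.  Let `A`, `B` be `𝒪_L`-modules with additive `G`-actions that
are semilinear over the action of `G` on `𝒪_L`, and let `f : A → B` be a surjective
`𝒪_L`-linear `G`-equivariant map.  Then the induced map on `G`-fixed points
`A^G → B^G` is surjective (equivalently, the fixed-point functor is exact). -/
theorem fixedPoints_surjective_of_tame
    (p : ℕ) (hp : p.Prime)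
    (K L : Type*) [Field K] [Field L] [CharZero K] [CharZero L] [Algebra K L]
    [IsGalois K L] [FiniteDimensional K L]
    (DK : LocalFieldData p K) (DL : LocalFieldData p L)
    (hcompat : ∀ x : K, DL.a (algebraMap K L x) = DK.a x)
    (hinv : ∀ (g : L ≃ₐ[K] L) (x : L), DL.a (g x) = DL.a x)
    -- `L/K` is tamely ramified: `p ∤ e_{L/K} = v_L(π_K)`
    (eLK : ℕ) (heLK : DL.a (algebraMap K L DK.ϖ) = DL.a DL.ϖ ^ eLK)
    (htame : ¬ (p ∣ eLK))
    -- the valuation ring `𝒪_L`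
    (O : Subring L) (hO : ∀ x : L, x ∈ O ↔ DL.a x ≤ 1)
    (A B : Type*) [AddCommGroup A] [AddCommGroup B] [Module O A] [Module O B]
    -- semilinear `G`-actions on `A` and `B`
    (ρA : (L ≃ₐ[K] L) → (A →+ A)) (ρB : (L ≃ₐ[K] L) → (B →+ B))
    (hρA1 : ρA 1 = AddMonoidHom.id A)
    (hρAmul : ∀ g h : L ≃ₐ[K] L, ρA (g * h) = (ρA g).comp (ρA h))
    (hρB1 : ρB 1 = AddMonoidHom.id B)
    (hρBmul : ∀ g h : L ≃ₐ[K] L, ρB (g * h) = (ρB g).comp (ρB h))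
    (hsemiA : ∀ (g : L ≃ₐ[K] L) (c : O) (x : A) (c' : O), (c' : L) = g (c : L) →
      ρA g (c • x) = c' • ρA g x)
    (hsemiB : ∀ (g : L ≃ₐ[K] L) (c : O) (x : B) (c' : O), (c' : L) = g (c : L) →
      ρB g (c • x) = c' • ρB g x)
    -- a surjective `𝒪_L`-linear `G`-equivariant map
    (f : A →ₗ[O] B) (hsurj : Function.Surjective f)
    (hequiv : ∀ (g : L ≃ₐ[K] L) (x : A), f (ρA g x) = ρB g (f x)) :
    ∀ b : B, (∀ g : L ≃ₐ[K] L, ρB g b = b) →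
      ∃ a : A, (∀ g : L ≃ₐ[K] L, ρA g a = a) ∧ f a = b := by
  intro b hb
  classical
  letI : Fintype (L ≃ₐ[K] L) := AlgEquiv.fintype K L
  have hKP0 : (algebraMap K L DK.ϖ : L) ≠ 0 := by
    have hϖ : DK.ϖ ≠ 0 := by
      intro h0
      have := DK.ϖ_pos
      rw [h0, DK.a_zero] at this
      exact lt_irrefl _ this
    intro h
    exact hϖ ((map_eq_zero_iff _ (algebraMap K L).injective).mp h)
  obtain ⟨t, ht, htr⟩ := exists_trace_unit DL hp hinv hKP0
    (fun g => g.commutes DK.ϖ) eLK heLK htame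
  set u : L := ∑ g : L ≃ₐ[K] L, g t with hu
  have hufix : ∀ h : L ≃ₐ[K] L, h u = u := by
    intro h
    rw [hu, map_sum]
    have h1 : ∀ g : L ≃ₐ[K] L, h (g t) = (h * g) t := fun g => rfl
    rw [Finset.sum_congr rfl fun g _ => h1 g]
    exact Fintype.sum_equiv (Equiv.mulLeft h) _ _ (fun g => rfl)
  have hu0 : u ≠ 0 := by
    intro h0
    rw [h0, DL.a_zero] at htr
    exact zero_ne_one htr
  have huinv : DL.a u⁻¹ = 1 := by rw [DL.a_inv, htr]; norm_num
  set c : L := t * u⁻¹ with hc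
  have hcle : DL.a c ≤ 1 := by rw [hc, DL.a_mul, huinv, mul_one]; exact ht
  have hcO : c ∈ O := (hO c).mpr hcle
  have hgcO : ∀ g : L ≃ₐ[K] L, g c ∈ O := fun g => (hO _).mpr (by rw [hinv]; exact hcle)
  set c' : (L ≃ₐ[K] L) → O := fun g => ⟨g c, hgcO g⟩ with hc'
  have hsumc : ∑ g : L ≃ₐ[K] L, c' g = (1 : O) := by
    apply Subtype.ext
    have hcast : ((∑ g : L ≃ₐ[K] L, c' g : O) : L) = ∑ g : L ≃ₐ[K] L, (c' g : L) :=
      map_sum O.subtype c' Finset.univ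
    rw [hcast]
    have h2 : ∀ g : L ≃ₐ[K] L, (c' g : L) = g t * u⁻¹ := by
      intro g
      show g (t * u⁻¹) = g t * u⁻¹
      rw [map_mul, map_inv₀, hufix g]
    rw [Finset.sum_congr rfl fun g _ => h2 g, ← Finset.sum_mul, ← hu,
      mul_inv_cancel₀ hu0]
    rfl
  obtain ⟨a₀, ha₀⟩ := hsurj b
  set cO : O := ⟨c, hcO⟩ with hcOdef
  refine ⟨∑ g : L ≃ₐ[K] L, ρA g (cO • a₀), ?_, ?_⟩
  · intro h
    rw [map_sum]
    have h1 : ∀ g : L ≃ₐ[K] L, ρA h (ρA g (cO • a₀)) = ρA (h * g) (cO • a₀) := by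
      intro g
      rw [hρAmul h g]
      rfl
    rw [Finset.sum_congr rfl fun g _ => h1 g]
    exact Fintype.sum_equiv (Equiv.mulLeft h) _ _ (fun g => rfl)
  · rw [map_sum]
    have hterm : ∀ g : L ≃ₐ[K] L, f (ρA g (cO • a₀)) = c' g • b := by
      intro g
      rw [hequiv g, map_smul, ha₀, hsemiB g cO b (c' g) rfl, hb g]
    rw [Finset.sum_congr rfl fun g _ => hterm g, ← Finset.sum_smul, hsumc, one_smul]
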